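/- Let Ω ⊂ ℝ³ be bounded and open, let M, K > 0, let φ : ℝ³ → [0,∞) be continuous, compactly supported and Lipschitz, and let β : ℝ³ → [0, M] and v : ℝ³ → [0, K] be measurable functions vanishing outside Ω. Define A(x) = ∫_Ω (β ∗ φ)(η) · v(η) · (4π |x−η|²)^{−1} · exp(−∫_0^{|x−η|} (β ∗ φ)(x + t·(η−x)/|η−x|) dt) dη. Then there exists a constant C > 0, depending only on Ω, M, K, sup φ and the Lipschitz constant of φ, such that |A(x) − A(x+h)| ≤ C |h|^{1/2} for all x ∈ Ω and all h ∈ ℝ³ with |h| ≤ 1 and x + h ∈ Ω. -/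

import Mathlib

open MeasureTheory Real Metric Set

noncomputable section

abbrev E3 := EuclideanSpace ℝ (Fin 3)

/-- The convolution `(β ∗ φ)(y) = ∫ β(ξ) φ(y - ξ) dξ`. -/
def convOp (β φ : E3 → ℝ) (y : E3) : ℝ := ∫ ξ, β ξ * φ (y - ξ)

/-- `A(x) = ∫_Ω (β∗φ)(η) v(η) (4π|x-η|²)⁻¹ exp(-∫_0^{|x-η|} (β∗φ)(x + t (η-x)/|η-x|) dt) dη`. -/
def Aop (Ω : Set E3) (β φ v : E3 → ℝ) (x : E3) : ℝ :=
  ∫ η in Ω, convOp β φ η * v η * (4 * π * ‖x - η‖ ^ 2)⁻¹ *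
    Real.exp (-(∫ t in (0:ℝ)..‖x - η‖, convOp β φ (x + t • (‖η - x‖⁻¹ • (η - x)))))

def B1 : ℝ := (volume (ball (0:E3) 1)).toReal

lemma B1_nonneg : 0 ≤ B1 := ENNReal.toReal_nonneg

lemma invsq_measurable (c : E3) : Measurable fun η : E3 => (‖c - η‖^2)⁻¹ :=
  (((continuous_const.sub continuous_id).norm.pow 2).measurable).inv

lemma finrank_E3 : Module.finrank ℝ E3 = 3 := by
  simp [finrank_euclideanSpace]

lemma vol_ball_E3 (c : E3) {r : ℝ} (hr : 0 ≤ r) :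
    (volume (ball c r)).toReal = r^3 * B1 := by
  rw [Measure.addHaar_ball volume c hr, finrank_E3, ENNReal.toReal_mul,
    ENNReal.toReal_ofReal (by positivity)]
  rfl

lemma annuli_cover (c : E3) {ρ : ℝ} (hρ : 0 < ρ) {η : E3} (hη : η ∈ ball c ρ) (hne : η ≠ c) :
    ∃ n : ℕ, η ∈ ball c (ρ / 2^n) \ ball c (ρ / 2^(n+1)) := by
  have hd : 0 < dist η c := dist_pos.mpr hne
  have hex : ∃ n : ℕ, ρ / 2^(n+1) ≤ dist η c := by
    obtain ⟨n, hn⟩ := exists_pow_lt_of_lt_one (div_pos hd hρ) (by norm_num : (1:ℝ)/2 < 1)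
    refine ⟨n, ?_⟩
    have key : ρ * ((1:ℝ)/2)^n < dist η c := by
      have := mul_lt_mul_of_pos_left hn hρ
      rwa [mul_div_cancel₀ _ hρ.ne'] at this
    have heq : ρ / 2^(n+1) = ρ * ((1:ℝ)/2)^(n+1) := by
      rw [div_eq_mul_inv, one_div, inv_pow]
    have hmono : ((1:ℝ)/2)^(n+1) ≤ ((1:ℝ)/2)^n :=
      pow_le_pow_of_le_one (by norm_num) (by norm_num) (by omega)
    have : ρ * ((1:ℝ)/2)^(n+1) ≤ ρ * ((1:ℝ)/2)^n :=
      mul_le_mul_of_nonneg_left hmono hρ.le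
    linarith
  classical
  set n₀ := Nat.find hex with hn₀
  refine ⟨n₀, ?_, ?_⟩
  · rcases Nat.eq_zero_or_pos n₀ with h0 | hpos
    · rw [h0]; simpa using hη
    · obtain ⟨m, hm⟩ := Nat.exists_eq_succ_of_ne_zero hpos.ne'
      have := Nat.find_min hex (m := m) (by omega)
      push_neg at this
      rw [mem_ball, hm]
      exact this
  · intro hmem
    rw [mem_ball] at hmem
    exact absurd (Nat.find_spec hex) (by linarith)

lemma annuli_summable {a : ℝ} : Summable fun n : ℕ => a * ((1:ℝ)/2)^n :=
  summable_geometric_two.mul_left a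

lemma integrableOn_invsq_annulus (c : E3) {ρ : ℝ} (hρ : 0 < ρ) (n : ℕ) :
    IntegrableOn (fun η : E3 => (‖c - η‖^2)⁻¹)
      (ball c (ρ / 2^n) \ ball c (ρ / 2^(n+1))) volume := by
  set s := ball c (ρ / 2^n) \ ball c (ρ / 2^(n+1))
  have hb : ∀ η ∈ s, (‖c - η‖^2)⁻¹ ≤ ((ρ / 2^(n+1))^2)⁻¹ := by
    intro η hη
    have h1 : ρ / 2^(n+1) ≤ ‖c - η‖ := by
      have := hη.2
      rw [mem_ball, dist_eq_norm] at this
      push_neg at this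
      rwa [norm_sub_rev]
    have h2 : (0:ℝ) < ρ / 2^(n+1) := by positivity
    apply inv_anti₀ (by positivity)
    exact pow_le_pow_left₀ h2.le h1 2
  refine Integrable.mono' (g := fun _ => ((ρ / 2^(n+1))^2)⁻¹) ?_ ?_ ?_
  · refine integrableOn_const ?_
    exact (lt_of_le_of_lt (measure_mono diff_subset) measure_ball_lt_top).ne
  · exact ((invsq_measurable c).aestronglyMeasurable).restrict
  · filter_upwards [ae_restrict_mem (measurableSet_ball.diff measurableSet_ball)] with η hη
    rw [Real.norm_eq_abs, abs_of_nonneg (by positivity)]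
    exact hb η hη

lemma integral_invsq_annulus_le (c : E3) {ρ : ℝ} (hρ : 0 < ρ) (n : ℕ) :
    ∫ η in ball c (ρ / 2^n) \ ball c (ρ / 2^(n+1)), (‖c - η‖^2)⁻¹ ≤ 4 * B1 * ρ * ((1:ℝ)/2)^n := by
  set s := ball c (ρ / 2^n) \ ball c (ρ / 2^(n+1))
  have hmeas : MeasurableSet s := measurableSet_ball.diff measurableSet_ball
  have h2 : (0:ℝ) < ρ / 2^(n+1) := by positivity
  have step1 : ∫ η in s, (‖c - η‖^2)⁻¹ ≤ ∫ _η in s, ((ρ / 2^(n+1))^2)⁻¹ := by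
    apply setIntegral_mono_on (integrableOn_invsq_annulus c hρ n)
      (integrableOn_const (lt_of_le_of_lt (measure_mono diff_subset) measure_ball_lt_top).ne)
      hmeas
    intro η hη
    have h1 : ρ / 2^(n+1) ≤ ‖c - η‖ := by
      have := hη.2
      rw [mem_ball, dist_eq_norm] at this
      push_neg at this
      rwa [norm_sub_rev]
    apply inv_anti₀ (by positivity)
    exact pow_le_pow_left₀ h2.le h1 2
  have step2 : ∫ _η in s, ((ρ / 2^(n+1))^2)⁻¹ ∂volume
      = (volume s).toReal * ((ρ / 2^(n+1))^2)⁻¹ := by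
    rw [setIntegral_const, smul_eq_mul]; rfl
  have step3 : (volume s).toReal ≤ (ρ / 2^n)^3 * B1 := by
    rw [← vol_ball_E3 c (by positivity : (0:ℝ) ≤ ρ / 2^n)]
    exact ENNReal.toReal_mono (measure_ball_lt_top).ne (measure_mono diff_subset)
  calc ∫ η in s, (‖c - η‖^2)⁻¹ ≤ (volume s).toReal * ((ρ / 2^(n+1))^2)⁻¹ := by
        rw [← step2]; exact step1
    _ ≤ (ρ / 2^n)^3 * B1 * ((ρ / 2^(n+1))^2)⁻¹ := by
        apply mul_le_mul_of_nonneg_right step3 (by positivity)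
    _ = 4 * B1 * ρ * ((1:ℝ)/2)^n := by
        have h2n : (2:ℝ)^n ≠ 0 := by positivity
        rw [one_div, inv_pow]
        field_simp
        ring

lemma annuli_disjoint (c : E3) {ρ : ℝ} (hρ : 0 < ρ) :
    Pairwise (Function.onFun Disjoint fun n : ℕ => ball c (ρ / 2^n) \ ball c (ρ / 2^(n+1))) := by
  rw [pairwise_disjoint_on]
  intro m n hmn
  apply Set.disjoint_left.mpr
  intro η hm hn
  have h1 : η ∉ ball c (ρ / 2^(m+1)) := hm.2
  have h2 : η ∈ ball c (ρ / 2^n) := hn.1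
  apply h1
  apply mem_ball.mpr
  calc dist η c < ρ / 2^n := mem_ball.mp h2
    _ ≤ ρ / 2^(m+1) := by
        apply div_le_div_of_nonneg_left hρ.le (by positivity)
        apply pow_le_pow_right₀ (by norm_num)
        omega

lemma summable_integral_annuli (c : E3) {ρ : ℝ} (hρ : 0 < ρ) :
    Summable fun n : ℕ => ∫ η in ball c (ρ / 2^n) \ ball c (ρ / 2^(n+1)), ‖(‖c - η‖^2)⁻¹‖ := by
  apply Summable.of_nonneg_of_le (fun n => integral_nonneg (fun η => norm_nonneg _))
    (fun n => ?_) (annuli_summable (a := 4 * B1 * ρ))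
  have : ∀ η : E3, ‖(‖c - η‖^2)⁻¹‖ = (‖c - η‖^2)⁻¹ := fun η => by
    rw [Real.norm_eq_abs, abs_of_nonneg (by positivity)]
  simp_rw [this]
  exact integral_invsq_annulus_le c hρ n

lemma integrableOn_invsq_union (c : E3) {ρ : ℝ} (hρ : 0 < ρ) :
    IntegrableOn (fun η : E3 => (‖c - η‖^2)⁻¹)
      (⋃ n : ℕ, ball c (ρ / 2^n) \ ball c (ρ / 2^(n+1))) volume :=
  integrableOn_iUnion_of_summable_integral_norm
    (fun n => integrableOn_invsq_annulus c hρ n)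
    (summable_integral_annuli c hρ)

lemma ball_subset_union (c : E3) {ρ : ℝ} (hρ : 0 < ρ) :
    ball c ρ ⊆ insert c (⋃ n : ℕ, ball c (ρ / 2^n) \ ball c (ρ / 2^(n+1))) := by
  intro η hη
  by_cases hne : η = c
  · exact hne ▸ Set.mem_insert _ _
  · obtain ⟨n, hn⟩ := annuli_cover c hρ hη hne
    exact Set.mem_insert_of_mem _ (Set.mem_iUnion.mpr ⟨n, hn⟩)

lemma integrableOn_invsq_ball (c : E3) {ρ : ℝ} (hρ : 0 < ρ) :
    IntegrableOn (fun η : E3 => (‖c - η‖^2)⁻¹) (ball c ρ) volume := by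
  apply IntegrableOn.mono_set (t := insert c (⋃ n : ℕ, ball c (ρ / 2^n) \ ball c (ρ / 2^(n+1))))
    ?_ (ball_subset_union c hρ)
  rw [← Set.union_singleton]
  apply IntegrableOn.union (integrableOn_invsq_union c hρ)
  rw [IntegrableOn, Measure.restrict_eq_zero.mpr (measure_singleton c)]
  exact integrable_zero_measure

lemma integral_invsq_ball_le (c : E3) {ρ : ℝ} (hρ : 0 < ρ) :
    ∫ η in ball c ρ, (‖c - η‖^2)⁻¹ ≤ 8 * B1 * ρ := by
  set S := ⋃ n : ℕ, ball c (ρ / 2^n) \ ball c (ρ / 2^(n+1)) with hS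
  have hint : IntegrableOn (fun η : E3 => (‖c - η‖^2)⁻¹) (insert c S) volume := by
    rw [← Set.union_singleton]
    apply IntegrableOn.union (integrableOn_invsq_union c hρ)
    rw [IntegrableOn, Measure.restrict_eq_zero.mpr (measure_singleton c)]
    exact integrable_zero_measure
  have step1 : ∫ η in ball c ρ, (‖c - η‖^2)⁻¹ ≤ ∫ η in insert c S, (‖c - η‖^2)⁻¹ :=
    setIntegral_mono_set hint (Filter.Eventually.of_forall fun η => by positivity)
      (HasSubset.Subset.eventuallyLE (ball_subset_union c hρ))
  have step2 : ∫ η in insert c S, (‖c - η‖^2)⁻¹ = ∫ η in S, (‖c - η‖^2)⁻¹ :=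
    setIntegral_congr_set (MeasureTheory.insert_ae_eq_self c S)
  have step3 : ∫ η in S, (‖c - η‖^2)⁻¹
      = ∑' n : ℕ, ∫ η in ball c (ρ / 2^n) \ ball c (ρ / 2^(n+1)), (‖c - η‖^2)⁻¹ :=
    integral_iUnion (fun n => measurableSet_ball.diff measurableSet_ball)
      (annuli_disjoint c hρ) (integrableOn_invsq_union c hρ)
  have step4 : ∑' n : ℕ, (∫ η in ball c (ρ / 2^n) \ ball c (ρ / 2^(n+1)), (‖c - η‖^2)⁻¹)
      ≤ ∑' n : ℕ, 4 * B1 * ρ * ((1:ℝ)/2)^n := by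
    apply Summable.tsum_le_tsum (fun n => integral_invsq_annulus_le c hρ n) ?_ annuli_summable
    have hs := summable_integral_annuli c hρ
    have : ∀ η : E3, ‖(‖c - η‖^2)⁻¹‖ = (‖c - η‖^2)⁻¹ := fun η => by
      rw [Real.norm_eq_abs, abs_of_nonneg (by positivity)]
    simpa only [this] using hs
  have step5 : ∑' n : ℕ, 4 * B1 * ρ * ((1:ℝ)/2)^n = 8 * B1 * ρ := by
    rw [tsum_mul_left, tsum_geometric_two]
    ring
  linarith

section Conv
variable {Ω : Set E3} {β φ : E3 → ℝ} {M Cφ : ℝ} {Lip : NNReal}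

lemma conv_integrable (hΩm : MeasurableSet Ω) (hΩf : volume Ω ≠ ⊤)
    (hβm : Measurable β) (hβ : ∀ y, 0 ≤ β y ∧ β y ≤ M) (hβ0 : ∀ y ∉ Ω, β y = 0)
    (hφc : Continuous φ) (hφ : ∀ y, 0 ≤ φ y ∧ φ y ≤ Cφ) (y : E3) :
    Integrable (fun ξ => β ξ * φ (y - ξ)) := by
  refine Integrable.mono' (g := Ω.indicator fun _ => M * Cφ) ?_ ?_ ?_
  · rw [integrable_indicator_iff hΩm]
    exact integrableOn_const hΩf
  · exact (hβm.mul (hφc.measurable.comp (measurable_const.sub measurable_id))).aestronglyMeasurable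
  · apply Filter.Eventually.of_forall
    intro ξ
    rw [Real.norm_eq_abs, abs_of_nonneg (mul_nonneg (hβ ξ).1 (hφ _).1)]
    by_cases hξ : ξ ∈ Ω
    · rw [Set.indicator_of_mem hξ]
      exact mul_le_mul (hβ ξ).2 (hφ _).2 (hφ _).1 (le_trans (hβ ξ).1 (hβ ξ).2)
    · rw [Set.indicator_of_notMem hξ, hβ0 ξ hξ, zero_mul]

lemma conv_nonneg (hβ : ∀ y, 0 ≤ β y ∧ β y ≤ M) (hφ : ∀ y, 0 ≤ φ y ∧ φ y ≤ Cφ) (y : E3) :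
    0 ≤ convOp β φ y :=
  integral_nonneg fun ξ => mul_nonneg (hβ ξ).1 (hφ _).1

lemma conv_le (hΩm : MeasurableSet Ω) (hΩf : volume Ω ≠ ⊤)
    (hβ : ∀ y, 0 ≤ β y ∧ β y ≤ M) (hβ0 : ∀ y ∉ Ω, β y = 0)
    (hφ : ∀ y, 0 ≤ φ y ∧ φ y ≤ Cφ) (y : E3) :
    convOp β φ y ≤ M * Cφ * (volume Ω).toReal := by
  have : convOp β φ y ≤ ∫ ξ, Ω.indicator (fun _ => M * Cφ) ξ := by
    apply integral_mono_of_nonneg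
      (Filter.Eventually.of_forall fun ξ => mul_nonneg (hβ ξ).1 (hφ _).1)
    · rw [integrable_indicator_iff hΩm]
      exact integrableOn_const hΩf
    · apply Filter.Eventually.of_forall
      intro ξ
      dsimp only
      by_cases hξ : ξ ∈ Ω
      · rw [Set.indicator_of_mem hξ]
        exact mul_le_mul (hβ ξ).2 (hφ _).2 (hφ _).1 (le_trans (hβ ξ).1 (hβ ξ).2)
      · rw [Set.indicator_of_notMem hξ, hβ0 ξ hξ, zero_mul]
  rwa [integral_indicator_const _ hΩm, smul_eq_mul, mul_comm (volume.real Ω)] at this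

lemma conv_lipschitz (hΩm : MeasurableSet Ω) (hΩf : volume Ω ≠ ⊤)
    (hβm : Measurable β) (hβ : ∀ y, 0 ≤ β y ∧ β y ≤ M) (hβ0 : ∀ y ∉ Ω, β y = 0)
    (hφc : Continuous φ) (hφ : ∀ y, 0 ≤ φ y ∧ φ y ≤ Cφ) (hφl : LipschitzWith Lip φ)
    (y y' : E3) :
    |convOp β φ y - convOp β φ y'| ≤ M * Lip * (volume Ω).toReal * ‖y - y'‖ := by
  have h1 : convOp β φ y - convOp β φ y'
      = ∫ ξ, (β ξ * φ (y - ξ) - β ξ * φ (y' - ξ)) :=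
    (integral_sub (conv_integrable hΩm hΩf hβm hβ hβ0 hφc hφ y)
      (conv_integrable hΩm hΩf hβm hβ hβ0 hφc hφ y')).symm
  rw [h1, ← Real.norm_eq_abs]
  calc ‖∫ ξ, (β ξ * φ (y - ξ) - β ξ * φ (y' - ξ))‖
      ≤ ∫ ξ, ‖β ξ * φ (y - ξ) - β ξ * φ (y' - ξ)‖ := norm_integral_le_integral_norm _
    _ ≤ ∫ ξ, Ω.indicator (fun _ => M * (Lip * ‖y - y'‖)) ξ := by
        apply integral_mono_of_nonneg
          (Filter.Eventually.of_forall fun ξ => norm_nonneg _)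
        · rw [integrable_indicator_iff hΩm]
          exact integrableOn_const hΩf
        · apply Filter.Eventually.of_forall
          intro ξ
          dsimp only
          by_cases hξ : ξ ∈ Ω
          · rw [Set.indicator_of_mem hξ, ← mul_sub, norm_mul]
            apply mul_le_mul ?_ ?_ (norm_nonneg _) (le_trans (hβ ξ).1 (hβ ξ).2)
            · rw [Real.norm_eq_abs, abs_of_nonneg (hβ ξ).1]; exact (hβ ξ).2
            · have := hφl.dist_le_mul (y - ξ) (y' - ξ)
              rw [Real.dist_eq, dist_eq_norm, sub_sub_sub_cancel_right] at this
              rwa [Real.norm_eq_abs]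
          · rw [Set.indicator_of_notMem hξ, hβ0 ξ hξ, zero_mul, zero_mul, sub_zero, norm_zero]
    _ = M * Lip * (volume Ω).toReal * ‖y - y'‖ := by
        rw [integral_indicator_const _ hΩm, smul_eq_mul, measureReal_def]; ring

lemma conv_continuous (hΩm : MeasurableSet Ω) (hΩf : volume Ω ≠ ⊤)
    (hβm : Measurable β) (hβ : ∀ y, 0 ≤ β y ∧ β y ≤ M) (hβ0 : ∀ y ∉ Ω, β y = 0)
    (hφc : Continuous φ) (hφ : ∀ y, 0 ≤ φ y ∧ φ y ≤ Cφ) (hφl : LipschitzWith Lip φ) :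
    Continuous (convOp β φ) := by
  apply LipschitzWith.continuous (K := Real.toNNReal (M * Lip * (volume Ω).toReal))
  apply LipschitzWith.of_dist_le_mul
  intro y y'
  rw [Real.dist_eq, dist_eq_norm]
  calc |convOp β φ y - convOp β φ y'| ≤ M * Lip * (volume Ω).toReal * ‖y - y'‖ :=
        conv_lipschitz hΩm hΩf hβm hβ hβ0 hφc hφ hφl y y'
    _ ≤ Real.toNNReal (M * Lip * (volume Ω).toReal) * ‖y - y'‖ := by
        apply mul_le_mul_of_nonneg_right (Real.le_coe_toNNReal _) (norm_nonneg _)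

end Conv

section Tker
variable {w : E3 → ℝ} {W Lw : ℝ}

/-- straight-line integral of `w` from `x` to `η`. -/
def Tker (w : E3 → ℝ) (x η : E3) : ℝ := ‖η - x‖ * ∫ s in (0:ℝ)..1, w (x + s • (η - x))

lemma Tker_subst (hwc : Continuous w) (x η : E3) :
    (∫ t in (0:ℝ)..‖x - η‖, w (x + t • (‖η - x‖⁻¹ • (η - x)))) = Tker w x η := by
  by_cases hη : η = x
  · subst hη
    simp [Tker]
  · have hL : 0 < ‖η - x‖ := by
      rw [norm_pos_iff, sub_ne_zero]; exact hη
    set L := ‖η - x‖ with hLdef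
    have hxη : ‖x - η‖ = L := norm_sub_rev x η
    have key := intervalIntegral.integral_comp_mul_left (a := (0:ℝ)) (b := (1:ℝ))
      (f := fun t => w (x + t • (L⁻¹ • (η - x)))) (c := L) hL.ne'
    have heq : ∀ s : ℝ, w (x + (L * s) • (L⁻¹ • (η - x))) = w (x + s • (η - x)) := by
      intro s
      congr 2
      rw [smul_smul]
      congr 1
      field_simp
    rw [hxη, Tker]
    simp only [mul_zero, mul_one] at key
    simp only [heq] at key
    rw [key, smul_eq_mul, ← hLdef]
    field_simp

lemma Tker_nonneg (hw0 : ∀ y, 0 ≤ w y) (x η : E3) : 0 ≤ Tker w x η :=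
  mul_nonneg (norm_nonneg _)
    (intervalIntegral.integral_nonneg zero_le_one fun s _ => hw0 _)

lemma seg_point_diff (x x' η η' : E3) (s : ℝ) :
    (x + s • (η - x)) - (x' + s • (η' - x')) = (1 - s) • (x - x') + s • (η - η') := by
  simp only [smul_sub, sub_smul, one_smul]
  abel

lemma I_diff (hwc : Continuous w) (hLw : 0 ≤ Lw)
    (hwL : ∀ y y', |w y - w y'| ≤ Lw * ‖y - y'‖) (x x' η η' : E3) :
    |(∫ s in (0:ℝ)..1, w (x + s • (η - x))) - ∫ s in (0:ℝ)..1, w (x' + s • (η' - x'))|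
      ≤ Lw * (‖x - x'‖ + ‖η - η'‖) := by
  have hi1 : IntervalIntegrable (fun s : ℝ => w (x + s • (η - x))) volume 0 1 :=
    (hwc.comp (by continuity)).intervalIntegrable 0 1
  have hi2 : IntervalIntegrable (fun s : ℝ => w (x' + s • (η' - x'))) volume 0 1 :=
    (hwc.comp (by continuity)).intervalIntegrable 0 1
  rw [← intervalIntegral.integral_sub hi1 hi2, ← Real.norm_eq_abs]
  have key := intervalIntegral.norm_integral_le_of_norm_le_const
    (C := Lw * (‖x - x'‖ + ‖η - η'‖))
    (f := fun s => w (x + s • (η - x)) - w (x' + s • (η' - x'))) (a := 0) (b := 1) ?_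
  · simpa using key
  · intro s hs
    rw [Set.uIoc_of_le zero_le_one] at hs
    rw [Real.norm_eq_abs]
    calc |w (x + s • (η - x)) - w (x' + s • (η' - x'))|
        ≤ Lw * ‖(x + s • (η - x)) - (x' + s • (η' - x'))‖ := hwL _ _
      _ ≤ Lw * (‖x - x'‖ + ‖η - η'‖) := by
          apply mul_le_mul_of_nonneg_left ?_ hLw
          calc ‖(x + s • (η - x)) - (x' + s • (η' - x'))‖
              = ‖(1 - s) • (x - x') + s • (η - η')‖ := by rw [seg_point_diff]
            _ ≤ ‖(1 - s) • (x - x')‖ + ‖s • (η - η')‖ := norm_add_le _ _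
            _ = |1 - s| * ‖x - x'‖ + |s| * ‖η - η'‖ := by
                rw [norm_smul, norm_smul, Real.norm_eq_abs, Real.norm_eq_abs]
            _ ≤ 1 * ‖x - x'‖ + 1 * ‖η - η'‖ := by
                have h1 : |1 - s| ≤ 1 := by
                  rw [abs_of_nonneg (by linarith [hs.2])]; linarith [hs.1]
                have h2 : |s| ≤ 1 := by
                  rw [abs_of_nonneg hs.1.le]; exact hs.2
                have := norm_nonneg (x - x')
                have := norm_nonneg (η - η')
                nlinarith
            _ = ‖x - x'‖ + ‖η - η'‖ := by ring

lemma I_bound (hw0 : ∀ y, 0 ≤ w y) (hwW : ∀ y, w y ≤ W) (x η : E3) :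
    |∫ s in (0:ℝ)..1, w (x + s • (η - x))| ≤ W := by
  rw [← Real.norm_eq_abs]
  have key := intervalIntegral.norm_integral_le_of_norm_le_const
    (C := W) (f := fun s => w (x + s • (η - x))) (a := 0) (b := 1) ?_
  · simpa using key
  · intro s _
    rw [Real.norm_eq_abs, abs_of_nonneg (hw0 _)]
    exact hwW _

lemma Tker_diff_x (hwc : Continuous w) (hLw : 0 ≤ Lw) (hw0 : ∀ y, 0 ≤ w y)
    (hwW : ∀ y, w y ≤ W) (hwL : ∀ y y', |w y - w y'| ≤ Lw * ‖y - y'‖) (x x' η : E3) :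
    |Tker w x η - Tker w x' η| ≤ (Lw * ‖η - x‖ + W) * ‖x - x'‖ := by
  set Ix := ∫ s in (0:ℝ)..1, w (x + s • (η - x)) with hIx
  set Ix' := ∫ s in (0:ℝ)..1, w (x' + s • (η - x')) with hIx'
  have hdec : Tker w x η - Tker w x' η
      = ‖η - x‖ * (Ix - Ix') + (‖η - x‖ - ‖η - x'‖) * Ix' := by
    rw [Tker, Tker]; ring
  have h1 : |Ix - Ix'| ≤ Lw * ‖x - x'‖ := by
    have := I_diff hwc hLw hwL x x' η η
    simpa using this
  have h2 : |‖η - x‖ - ‖η - x'‖| ≤ ‖x - x'‖ := by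
    calc |‖η - x‖ - ‖η - x'‖| ≤ ‖(η - x) - (η - x')‖ := abs_norm_sub_norm_le _ _
      _ = ‖x - x'‖ := by rw [show (η - x) - (η - x') = -(x - x') by abel, norm_neg]
  have h3 : |Ix'| ≤ W := I_bound hw0 hwW x' η
  calc |Tker w x η - Tker w x' η|
      ≤ ‖η - x‖ * |Ix - Ix'| + |‖η - x‖ - ‖η - x'‖| * |Ix'| := by
        rw [hdec]
        calc |‖η - x‖ * (Ix - Ix') + (‖η - x‖ - ‖η - x'‖) * Ix'|
            ≤ |‖η - x‖ * (Ix - Ix')| + |(‖η - x‖ - ‖η - x'‖) * Ix'| := abs_add_le _ _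
          _ = ‖η - x‖ * |Ix - Ix'| + |‖η - x‖ - ‖η - x'‖| * |Ix'| := by
              rw [abs_mul, abs_mul, abs_of_nonneg (norm_nonneg _)]
    _ ≤ (Lw * ‖η - x‖ + W) * ‖x - x'‖ := by
        have hb1 : ‖η - x‖ * |Ix - Ix'| ≤ ‖η - x‖ * (Lw * ‖x - x'‖) :=
          mul_le_mul_of_nonneg_left h1 (norm_nonneg _)
        have hb2 : |‖η - x‖ - ‖η - x'‖| * |Ix'| ≤ ‖x - x'‖ * W :=
          mul_le_mul h2 h3 (abs_nonneg _) (norm_nonneg _)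
        nlinarith [norm_nonneg (x - x'), norm_nonneg (η - x)]

lemma Tker_continuous (hwc : Continuous w) (hLw : 0 ≤ Lw)
    (hwL : ∀ y y', |w y - w y'| ≤ Lw * ‖y - y'‖) (x : E3) :
    Continuous (fun η => Tker w x η) := by
  apply Continuous.mul (Continuous.norm (continuous_id.sub continuous_const))
  apply LipschitzWith.continuous (K := Real.toNNReal Lw)
  apply LipschitzWith.of_dist_le_mul
  intro η η'
  rw [Real.dist_eq, dist_eq_norm]
  calc |(∫ s in (0:ℝ)..1, w (x + s • (η - x))) - ∫ s in (0:ℝ)..1, w (x + s • (η' - x))|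
      ≤ Lw * (‖x - x‖ + ‖η - η'‖) := I_diff hwc hLw hwL x x η η'
    _ = Lw * ‖η - η'‖ := by simp
    _ ≤ Real.toNNReal Lw * ‖η - η'‖ :=
        mul_le_mul_of_nonneg_right (Real.le_coe_toNNReal _) (norm_nonneg _)

end Tker

lemma exp_neg_diff_le {s t : ℝ} (hs : 0 ≤ s) (ht : 0 ≤ t) :
    |Real.exp (-s) - Real.exp (-t)| ≤ |s - t| := by
  wlog hst : t ≤ s generalizing s t
  · rw [abs_sub_comm, abs_sub_comm s t]
    exact this ht hs (le_of_not_ge hst)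
  have h1 : Real.exp (-s) ≤ Real.exp (-t) := Real.exp_le_exp.mpr (by linarith)
  have h2 := Real.add_one_le_exp (t - s)
  have h3 : Real.exp (-t) * ((t - s) + 1) ≤ Real.exp (-t) * Real.exp (t - s) :=
    mul_le_mul_of_nonneg_left h2 (Real.exp_pos _).le
  rw [← Real.exp_add] at h3
  have h3' : Real.exp (-t + (t - s)) = Real.exp (-s) := by ring_nf
  rw [h3'] at h3
  have h4 : Real.exp (-t) ≤ 1 := Real.exp_le_one_iff.mpr (by linarith)
  rw [abs_of_nonpos (sub_nonpos.mpr h1), abs_of_nonneg (sub_nonneg.mpr hst)]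
  nlinarith [(Real.exp_pos (-t)).le]

lemma inv_sq_diff_le {a b r d : ℝ} (hr : 0 < r) (ha : r ≤ a) (hb : r ≤ b)
    (hd : |a - b| ≤ d) : |(a^2)⁻¹ - (b^2)⁻¹| ≤ d * r⁻¹ * ((a^2)⁻¹ + (b^2)⁻¹) := by
  have ha0 : 0 < a := lt_of_lt_of_le hr ha
  have hb0 : 0 < b := lt_of_lt_of_le hr hb
  have hd0 : 0 ≤ d := le_trans (abs_nonneg _) hd
  have e1 : (a^2)⁻¹ - (b^2)⁻¹ = (b - a) * (b + a) / (a^2 * b^2) := by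
    field_simp
    ring
  rw [e1, abs_div, abs_of_pos (by positivity : (0:ℝ) < a^2*b^2), abs_mul,
    abs_of_pos (by positivity : (0:ℝ) < b + a)]
  have h2 : |b - a| ≤ d := by rwa [abs_sub_comm]
  calc |b - a| * (b + a) / (a^2 * b^2) ≤ d * (b + a) / (a^2 * b^2) := by gcongr
    _ ≤ d * r⁻¹ * ((a^2)⁻¹ + (b^2)⁻¹) := by
        rw [div_le_iff₀ (by positivity : (0:ℝ) < a^2*b^2)]
        have expand : d * r⁻¹ * ((a^2)⁻¹ + (b^2)⁻¹) * (a^2 * b^2) = d * r⁻¹ * (a^2 + b^2) := by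
          field_simp
          ring
        rw [expand]
        have hkey : r * (b + a) ≤ a^2 + b^2 := by nlinarith
        calc d * (b + a) = d * (r⁻¹ * (r * (b + a))) := by field_simp
          _ ≤ d * (r⁻¹ * (a^2 + b^2)) := by gcongr
          _ = d * r⁻¹ * (a^2 + b^2) := by ring

lemma kernel_diff_le {g GB pa pb ea eb L r : ℝ}
    (hg0 : 0 ≤ g) (hgB : g ≤ GB) (hpa : 0 ≤ pa) (hpb : 0 ≤ pb)
    (hea : 0 ≤ ea) (hea1 : ea ≤ 1) (_heb : 0 ≤ eb) (_heb1 : eb ≤ 1)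
    (hinv : |pa - pb| ≤ r * (pa + pb)) (hexp : |ea - eb| ≤ L * r)
    (hL : 0 ≤ L) (hr : 0 ≤ r) :
    |g * (pa * ea) - g * (pb * eb)| ≤ GB * ((1 + L) * r) * (pa + pb) := by
  have hGB0 : 0 ≤ GB := le_trans hg0 hgB
  have key : |pa * ea - pb * eb| ≤ |pa - pb| + pb * |ea - eb| := by
    have hid : pa * ea - pb * eb = (pa - pb) * ea + pb * (ea - eb) := by ring
    calc |pa * ea - pb * eb| = |(pa - pb) * ea + pb * (ea - eb)| := by rw [hid]
      _ ≤ |(pa - pb) * ea| + |pb * (ea - eb)| := abs_add_le _ _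
      _ = |pa - pb| * ea + pb * |ea - eb| := by
          rw [abs_mul, abs_mul, abs_of_nonneg hea, abs_of_nonneg hpb]
      _ ≤ |pa - pb| + pb * |ea - eb| := by nlinarith [abs_nonneg (pa - pb)]
  rw [← mul_sub, abs_mul, abs_of_nonneg hg0]
  calc g * |pa * ea - pb * eb| ≤ GB * (|pa - pb| + pb * |ea - eb|) :=
        mul_le_mul hgB key (abs_nonneg _) hGB0
    _ ≤ GB * ((1 + L) * r * (pa + pb)) := by
        apply mul_le_mul_of_nonneg_left ?_ hGB0
        have h1 : pb * |ea - eb| ≤ pb * (L * r) := mul_le_mul_of_nonneg_left hexp hpb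
        nlinarith [mul_nonneg (mul_nonneg hL hr) hpa]
    _ = GB * ((1 + L) * r) * (pa + pb) := by ring

set_option maxHeartbeats 1000000 in
theorem stmt16 (Ω : Set E3) (hΩo : IsOpen Ω) (hΩb : Bornology.IsBounded Ω)
    (M K Cφ : ℝ) (hM : 0 < M) (hK : 0 < K) (hCφ : 0 < Cφ) (Lip : NNReal) :
    ∃ C : ℝ, 0 < C ∧
      ∀ φ : E3 → ℝ, Continuous φ → HasCompactSupport φ →
        (∀ y, 0 ≤ φ y ∧ φ y ≤ Cφ) → LipschitzWith Lip φ →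
      ∀ β v : E3 → ℝ, Measurable β → Measurable v →
        (∀ y, 0 ≤ β y ∧ β y ≤ M) → (∀ y, y ∉ Ω → β y = 0) →
        (∀ y, 0 ≤ v y ∧ v y ≤ K) → (∀ y, y ∉ Ω → v y = 0) →
      ∀ x : E3, x ∈ Ω → ∀ h : E3, ‖h‖ ≤ 1 → x + h ∈ Ω →
        |Aop Ω β φ v x - Aop Ω β φ v (x + h)| ≤ C * Real.sqrt ‖h‖ := by
  have hΩm : MeasurableSet Ω := hΩo.measurableSet
  obtain ⟨R, hR1, hΩR⟩ := hΩb.subset_ball_lt 1 0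
  have hR0 : (0:ℝ) < R := lt_trans one_pos hR1
  have hΩf : volume Ω ≠ ⊤ := (lt_of_le_of_lt (measure_mono hΩR) measure_ball_lt_top).ne
  set V : ℝ := (volume Ω).toReal with hVdef
  have hV0 : 0 ≤ V := ENNReal.toReal_nonneg
  set W : ℝ := M * Cφ * V with hWdef
  set Lw : ℝ := M * ↑Lip * V with hLwdef
  have hW0 : 0 ≤ W := mul_nonneg (mul_nonneg hM.le hCφ.le) hV0
  have hLw0 : 0 ≤ Lw := mul_nonneg (mul_nonneg hM.le Lip.coe_nonneg) hV0
  set GB : ℝ := W * K with hGBdef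
  have hGB0 : 0 ≤ GB := mul_nonneg hW0 hK.le
  set Lτ : ℝ := Lw * (2 * R) + W with hLτdef
  have hLτ0 : 0 ≤ Lτ := add_nonneg (mul_nonneg hLw0 (by linarith)) hW0
  have hπ : (0:ℝ) < 4 * π := by positivity
  set C0 : ℝ := GB * (4 * π)⁻¹ * 40 * B1 + GB * (4 * π)⁻¹ * ((1 + Lτ) * 32 * B1 * R) with hC0def
  have hC00 : 0 ≤ C0 := by
    apply add_nonneg
    · exact mul_nonneg (mul_nonneg (mul_nonneg hGB0 (by positivity)) (by norm_num)) B1_nonneg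
    · apply mul_nonneg (mul_nonneg hGB0 (by positivity))
      apply mul_nonneg (mul_nonneg (mul_nonneg (by linarith) (by norm_num)) B1_nonneg) hR0.le
  refine ⟨C0 + 1, by linarith, ?_⟩
  intro φ hφc _hφsupp hφb hφl β v hβm hvm hβb hβ0 hvb _hv0 x hx h hh hxh
  -- convolution facts
  have hw0 : ∀ y, 0 ≤ convOp β φ y := conv_nonneg hβb hφb
  have hwW : ∀ y, convOp β φ y ≤ W := fun y => conv_le hΩm hΩf hβb hβ0 hφb y
  have hwL : ∀ y y', |convOp β φ y - convOp β φ y'| ≤ Lw * ‖y - y'‖ := fun y y' =>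
    conv_lipschitz hΩm hΩf hβm hβb hβ0 hφc hφb hφl y y'
  have hwc : Continuous (convOp β φ) := conv_continuous hΩm hΩf hβm hβb hβ0 hφc hφb hφl
  -- the integrand after substitution
  set F : E3 → E3 → ℝ := fun z η => convOp β φ η * v η * (4 * π * ‖z - η‖ ^ 2)⁻¹ *
    Real.exp (-(Tker (convOp β φ) z η)) with hFdef
  have hA : ∀ z : E3, Aop Ω β φ v z = ∫ η in Ω, F z η := by
    intro z
    unfold Aop
    refine setIntegral_congr_fun hΩm fun η _ => ?_
    rw [hFdef]
    simp only [Tker_subst hwc]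
  -- pointwise bounds on F
  have hF0 : ∀ z η, 0 ≤ F z η := by
    intro z η
    rw [hFdef]
    apply mul_nonneg (mul_nonneg (mul_nonneg (hw0 η) (hvb η).1) ?_) (Real.exp_pos _).le
    exact inv_nonneg.mpr (mul_nonneg (by positivity) (sq_nonneg _))
  have hFle : ∀ z η, F z η ≤ GB * ((4 * π)⁻¹ * (‖z - η‖ ^ 2)⁻¹) := by
    intro z η
    rw [hFdef]
    have hg : convOp β φ η * v η ≤ GB := by
      rw [hGBdef]
      exact mul_le_mul (hwW η) (hvb η).2 (hvb η).1 hW0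
    have hinv0 : (0:ℝ) ≤ (4 * π * ‖z - η‖ ^ 2)⁻¹ :=
      inv_nonneg.mpr (mul_nonneg (by positivity) (sq_nonneg _))
    have hexp1 : Real.exp (-(Tker (convOp β φ) z η)) ≤ 1 :=
      Real.exp_le_one_iff.mpr (neg_nonpos.mpr (Tker_nonneg hw0 z η))
    calc convOp β φ η * v η * (4 * π * ‖z - η‖ ^ 2)⁻¹ * Real.exp (-(Tker (convOp β φ) z η))
        ≤ GB * (4 * π * ‖z - η‖ ^ 2)⁻¹ * 1 := by
          apply mul_le_mul ?_ hexp1 (Real.exp_pos _).le (mul_nonneg hGB0 hinv0)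
          exact mul_le_mul_of_nonneg_right hg hinv0
      _ = GB * ((4 * π)⁻¹ * (‖z - η‖ ^ 2)⁻¹) := by rw [mul_inv]; ring
  -- measurability of F z
  have hFmeas : ∀ z : E3, AEStronglyMeasurable (F z) (volume.restrict Ω) := by
    intro z
    rw [hFdef]
    apply Measurable.aestronglyMeasurable
    apply Measurable.mul
    apply Measurable.mul
    apply Measurable.mul hwc.measurable hvm
    · exact (measurable_const.mul (((continuous_const.sub continuous_id).norm.pow 2).measurable)).inv
    · exact (Real.continuous_exp.comp (Tker_continuous hwc hLw0 hwL z).neg).measurable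
  -- integrability facts
  have hsubΩ : ∀ z ∈ Ω, Ω ⊆ ball z (2 * R) := by
    intro z hz η hη
    rw [mem_ball]
    calc dist η z ≤ dist η 0 + dist 0 z := dist_triangle _ _ _
      _ < R + R := add_lt_add (mem_ball.mp (hΩR hη)) (by
          rw [dist_comm]; exact mem_ball.mp (hΩR hz))
      _ = 2 * R := by ring
  have h2R : (0:ℝ) < 2 * R := by linarith
  have hIinvΩ : ∀ z ∈ Ω, IntegrableOn (fun η : E3 => (‖z - η‖ ^ 2)⁻¹) Ω volume := fun z hz =>
    (integrableOn_invsq_ball z h2R).mono_set (hsubΩ z hz)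
  have hIintΩ : ∀ z ∈ Ω, (∫ η in Ω, (‖z - η‖ ^ 2)⁻¹) ≤ 8 * B1 * (2 * R) := by
    intro z hz
    calc (∫ η in Ω, (‖z - η‖ ^ 2)⁻¹) ≤ ∫ η in ball z (2 * R), (‖z - η‖ ^ 2)⁻¹ :=
          setIntegral_mono_set (integrableOn_invsq_ball z h2R)
            (Filter.Eventually.of_forall fun η => by positivity)
            (HasSubset.Subset.eventuallyLE (hsubΩ z hz))
      _ ≤ 8 * B1 * (2 * R) := integral_invsq_ball_le z h2R
  have hFint : ∀ z ∈ Ω, IntegrableOn (F z) Ω volume := by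
    intro z hz
    refine Integrable.mono' (g := fun η => GB * ((4 * π)⁻¹ * (‖z - η‖ ^ 2)⁻¹))
      (((hIinvΩ z hz).const_mul _).const_mul _) (hFmeas z) ?_
    apply Filter.Eventually.of_forall
    intro η
    rw [Real.norm_eq_abs, abs_of_nonneg (hF0 z η)]
    exact hFle z η
  -- trivial case h = 0
  by_cases hh0 : h = 0
  · subst hh0
    simp
  -- nontrivial case
  have hh0' : 0 < ‖h‖ := norm_pos_iff.mpr hh0
  set r : ℝ := Real.sqrt ‖h‖ with hrdef
  have hr0 : 0 < r := Real.sqrt_pos.mpr hh0'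
  have hr1 : r ≤ 1 := by
    rw [hrdef, show (1:ℝ) = Real.sqrt 1 by rw [Real.sqrt_one]]
    exact Real.sqrt_le_sqrt hh
  have hrr : r * r = ‖h‖ := Real.mul_self_sqrt (norm_nonneg h)
  have hhr : ‖h‖ ≤ r := by nlinarith
  set x' : E3 := x + h with hx'def
  have hxx' : ‖x - x'‖ = ‖h‖ := by
    rw [hx'def, show x - (x + h) = -h by abel, norm_neg]
  -- pointwise near bound
  have hnear_pt : ∀ η : E3, |F x η - F x' η|
      ≤ GB * ((4 * π)⁻¹ * (‖x - η‖ ^ 2)⁻¹) + GB * ((4 * π)⁻¹ * (‖x' - η‖ ^ 2)⁻¹) := by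
    intro η
    have h1 := hF0 x η
    have h2 := hF0 x' η
    have h3 := hFle x η
    have h4 := hFle x' η
    rw [abs_sub_le_iff]
    constructor <;> linarith
  -- pointwise far bound
  have hfar_pt : ∀ η ∈ Ω \ ball x (2 * r), |F x η - F x' η|
      ≤ GB * ((1 + Lτ) * r) * ((4 * π)⁻¹ * (‖x - η‖ ^ 2)⁻¹ + (4 * π)⁻¹ * (‖x' - η‖ ^ 2)⁻¹) := by
    rintro η ⟨hηΩ, hηB⟩
    set a : ℝ := ‖x - η‖ with hadef
    set b : ℝ := ‖x' - η‖ with hbdef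
    have ha2r : 2 * r ≤ a := by
      rw [mem_ball, not_lt] at hηB
      rw [hadef, norm_sub_rev, ← dist_eq_norm]
      exact hηB
    have hab : |a - b| ≤ ‖h‖ := by
      calc |a - b| ≤ ‖(x - η) - (x' - η)‖ := abs_norm_sub_norm_le _ _
        _ = ‖h‖ := by rw [show (x - η) - (x' - η) = x - x' by abel, hxx']
    have hbr : r ≤ b := by
      have := (abs_le.mp hab).2
      linarith
    have har : r ≤ a := by linarith
    -- Tker difference
    have hTd : |Tker (convOp β φ) x η - Tker (convOp β φ) x' η| ≤ Lτ * ‖h‖ := by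
      have hstep := Tker_diff_x hwc hLw0 hw0 hwW hwL x x' η
      have hηx : ‖η - x‖ ≤ 2 * R := by
        calc ‖η - x‖ ≤ ‖η‖ + ‖x‖ := norm_sub_le _ _
          _ ≤ R + R := add_le_add (mem_ball_zero_iff.mp (hΩR hηΩ)).le
              (mem_ball_zero_iff.mp (hΩR hx)).le
          _ = 2 * R := by ring
      calc |Tker (convOp β φ) x η - Tker (convOp β φ) x' η|
          ≤ (Lw * ‖η - x‖ + W) * ‖x - x'‖ := hstep
        _ ≤ (Lw * (2 * R) + W) * ‖h‖ := by
            rw [hxx']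
            apply mul_le_mul_of_nonneg_right ?_ (norm_nonneg h)
            have := mul_le_mul_of_nonneg_left hηx hLw0
            linarith
        _ = Lτ * ‖h‖ := by rw [hLτdef]
    -- exp difference
    have hT0x := Tker_nonneg hw0 x η
    have hT0x' := Tker_nonneg hw0 x' η
    have hed : |Real.exp (-(Tker (convOp β φ) x η)) - Real.exp (-(Tker (convOp β φ) x' η))|
        ≤ Lτ * r := by
      calc |Real.exp (-(Tker (convOp β φ) x η)) - Real.exp (-(Tker (convOp β φ) x' η))|
          ≤ |Tker (convOp β φ) x η - Tker (convOp β φ) x' η| := exp_neg_diff_le hT0x hT0x'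
        _ ≤ Lτ * ‖h‖ := hTd
        _ ≤ Lτ * r := mul_le_mul_of_nonneg_left hhr hLτ0
    -- inverse-square difference
    have hid : |(a ^ 2)⁻¹ - (b ^ 2)⁻¹| ≤ r * ((a ^ 2)⁻¹ + (b ^ 2)⁻¹) := by
      have := inv_sq_diff_le hr0 har hbr hab
      have hrinv : ‖h‖ * r⁻¹ = r := by
        rw [← hrr]
        field_simp
      rw [hrinv] at this
      exact this
    -- assemble via kernel_diff_le
    have hpa4 : |(4 * π)⁻¹ * (a ^ 2)⁻¹ - (4 * π)⁻¹ * (b ^ 2)⁻¹|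
        ≤ r * ((4 * π)⁻¹ * (a ^ 2)⁻¹ + (4 * π)⁻¹ * (b ^ 2)⁻¹) := by
      rw [← mul_sub, abs_mul, abs_of_nonneg (by positivity : (0:ℝ) ≤ (4*π)⁻¹)]
      calc (4 * π)⁻¹ * |(a ^ 2)⁻¹ - (b ^ 2)⁻¹| ≤ (4 * π)⁻¹ * (r * ((a ^ 2)⁻¹ + (b ^ 2)⁻¹)) :=
            mul_le_mul_of_nonneg_left hid (by positivity)
        _ = r * ((4 * π)⁻¹ * (a ^ 2)⁻¹ + (4 * π)⁻¹ * (b ^ 2)⁻¹) := by ring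
    have hFshape : ∀ z : E3, F z η = (convOp β φ η * v η) *
        (((4 * π)⁻¹ * (‖z - η‖ ^ 2)⁻¹) * Real.exp (-(Tker (convOp β φ) z η))) := by
      intro z
      rw [hFdef]
      dsimp only
      rw [mul_inv]
      ring
    rw [hFshape x, hFshape x']
    have hg0 : 0 ≤ convOp β φ η * v η := mul_nonneg (hw0 η) (hvb η).1
    have hgB : convOp β φ η * v η ≤ GB := by
      rw [hGBdef]
      exact mul_le_mul (hwW η) (hvb η).2 (hvb η).1 hW0
    exact kernel_diff_le hg0 hgB (by positivity) (by positivity)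
      (Real.exp_pos _).le (Real.exp_le_one_iff.mpr (neg_nonpos.mpr hT0x))
      (Real.exp_pos _).le (Real.exp_le_one_iff.mpr (neg_nonpos.mpr hT0x'))
      hpa4 hed hLτ0 hr0.le
  -- integral assembly
  have hIx := hIinvΩ x hx
  have hIx' := hIinvΩ x' hxh
  have hFx := hFint x hx
  have hFx' := hFint x' hxh
  have hGint : IntegrableOn (fun η => |F x η - F x' η|) Ω volume := (hFx.sub hFx').abs
  rw [hA x, hA x']
  have habs : |(∫ η in Ω, F x η) - ∫ η in Ω, F x' η| ≤ ∫ η in Ω, |F x η - F x' η| := by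
    rw [← integral_sub hFx hFx']
    simpa [Real.norm_eq_abs] using
      norm_integral_le_integral_norm (μ := volume.restrict Ω) (fun η => F x η - F x' η)
  have hsplit : (∫ η in Ω, |F x η - F x' η|)
      = (∫ η in Ω ∩ ball x (2*r), |F x η - F x' η|)
        + ∫ η in Ω \ ball x (2*r), |F x η - F x' η| := by
    rw [← setIntegral_union (Set.disjoint_left.mpr fun a ha hb => hb.2 ha.2)
      (hΩm.diff measurableSet_ball) (hGint.mono_set Set.inter_subset_left)
      (hGint.mono_set Set.diff_subset), Set.inter_union_diff]
  have h2r0 : (0:ℝ) < 2*r := by linarith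
  have h3r0 : (0:ℝ) < 3*r := by linarith
  have hnear_sub : Ω ∩ ball x (2*r) ⊆ ball x' (3*r) := by
    rintro η ⟨-, hηb⟩
    rw [mem_ball] at hηb ⊢
    calc dist η x' ≤ dist η x + dist x x' := dist_triangle _ _ _
      _ < 2*r + ‖h‖ := add_lt_add_of_lt_of_le hηb (by rw [dist_eq_norm, hxx'])
      _ ≤ 3*r := by linarith
  have hc4 : (0:ℝ) ≤ (4*π)⁻¹ := by positivity
  -- near piece
  have hnear : (∫ η in Ω ∩ ball x (2*r), |F x η - F x' η|)
      ≤ GB * (4*π)⁻¹ * 40 * B1 * r := by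
    have hIb1 : IntegrableOn (fun η : E3 => GB * ((4*π)⁻¹ * (‖x - η‖^2)⁻¹))
        (Ω ∩ ball x (2*r)) volume :=
      ((hIx.mono_set Set.inter_subset_left).const_mul _).const_mul _
    have hIb2 : IntegrableOn (fun η : E3 => GB * ((4*π)⁻¹ * (‖x' - η‖^2)⁻¹))
        (Ω ∩ ball x (2*r)) volume :=
      ((hIx'.mono_set Set.inter_subset_left).const_mul _).const_mul _
    have hJ1 : (∫ η in Ω ∩ ball x (2*r), (‖x - η‖^2)⁻¹) ≤ 8 * B1 * (2*r) :=
      le_trans (setIntegral_mono_set (integrableOn_invsq_ball x h2r0)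
          (Filter.Eventually.of_forall fun η => by positivity)
          (HasSubset.Subset.eventuallyLE Set.inter_subset_right))
        (integral_invsq_ball_le x h2r0)
    have hJ2 : (∫ η in Ω ∩ ball x (2*r), (‖x' - η‖^2)⁻¹) ≤ 8 * B1 * (3*r) :=
      le_trans (setIntegral_mono_set (integrableOn_invsq_ball x' h3r0)
          (Filter.Eventually.of_forall fun η => by positivity)
          (HasSubset.Subset.eventuallyLE hnear_sub))
        (integral_invsq_ball_le x' h3r0)
    calc (∫ η in Ω ∩ ball x (2*r), |F x η - F x' η|)
        ≤ ∫ η in Ω ∩ ball x (2*r),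
            (GB * ((4*π)⁻¹ * (‖x - η‖^2)⁻¹) + GB * ((4*π)⁻¹ * (‖x' - η‖^2)⁻¹)) :=
          setIntegral_mono_on (hGint.mono_set Set.inter_subset_left) (hIb1.add hIb2)
            (hΩm.inter measurableSet_ball) (fun η _ => hnear_pt η)
      _ = GB * ((4*π)⁻¹ * ∫ η in Ω ∩ ball x (2*r), (‖x - η‖^2)⁻¹)
            + GB * ((4*π)⁻¹ * ∫ η in Ω ∩ ball x (2*r), (‖x' - η‖^2)⁻¹) := by
          rw [integral_add hIb1 hIb2, integral_const_mul, integral_const_mul,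
            integral_const_mul, integral_const_mul]
      _ ≤ GB * ((4*π)⁻¹ * (8 * B1 * (2*r))) + GB * ((4*π)⁻¹ * (8 * B1 * (3*r))) :=
          add_le_add
            (mul_le_mul_of_nonneg_left (mul_le_mul_of_nonneg_left hJ1 hc4) hGB0)
            (mul_le_mul_of_nonneg_left (mul_le_mul_of_nonneg_left hJ2 hc4) hGB0)
      _ = GB * (4*π)⁻¹ * 40 * B1 * r := by ring
  -- far piece
  have hfar : (∫ η in Ω \ ball x (2*r), |F x η - F x' η|)
      ≤ GB * (4*π)⁻¹ * ((1 + Lτ) * 32 * B1 * R) * r := by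
    have hIc1 : IntegrableOn (fun η : E3 => (4*π)⁻¹ * (‖x - η‖^2)⁻¹) (Ω \ ball x (2*r)) volume :=
      (hIx.mono_set Set.diff_subset).const_mul _
    have hIc2 : IntegrableOn (fun η : E3 => (4*π)⁻¹ * (‖x' - η‖^2)⁻¹) (Ω \ ball x (2*r)) volume :=
      (hIx'.mono_set Set.diff_subset).const_mul _
    have hJ1 : (∫ η in Ω \ ball x (2*r), (‖x - η‖^2)⁻¹) ≤ 8 * B1 * (2*R) :=
      le_trans (setIntegral_mono_set hIx
          (Filter.Eventually.of_forall fun η => by positivity)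
          (HasSubset.Subset.eventuallyLE Set.diff_subset))
        (hIintΩ x hx)
    have hJ2 : (∫ η in Ω \ ball x (2*r), (‖x' - η‖^2)⁻¹) ≤ 8 * B1 * (2*R) :=
      le_trans (setIntegral_mono_set hIx'
          (Filter.Eventually.of_forall fun η => by positivity)
          (HasSubset.Subset.eventuallyLE Set.diff_subset))
        (hIintΩ x' hxh)
    have hcoef : (0:ℝ) ≤ GB * ((1 + Lτ) * r) :=
      mul_nonneg hGB0 (mul_nonneg (by linarith) hr0.le)
    calc (∫ η in Ω \ ball x (2*r), |F x η - F x' η|)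
        ≤ ∫ η in Ω \ ball x (2*r),
            GB * ((1 + Lτ) * r) * ((4*π)⁻¹ * (‖x - η‖^2)⁻¹ + (4*π)⁻¹ * (‖x' - η‖^2)⁻¹) :=
          setIntegral_mono_on (hGint.mono_set Set.diff_subset)
            ((hIc1.add hIc2).const_mul _)
            (hΩm.diff measurableSet_ball) hfar_pt
      _ = GB * ((1 + Lτ) * r) * ((4*π)⁻¹ * (∫ η in Ω \ ball x (2*r), (‖x - η‖^2)⁻¹)
            + (4*π)⁻¹ * ∫ η in Ω \ ball x (2*r), (‖x' - η‖^2)⁻¹) := by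
          rw [integral_const_mul, integral_add hIc1 hIc2, integral_const_mul, integral_const_mul]
      _ ≤ GB * ((1 + Lτ) * r) * ((4*π)⁻¹ * (8 * B1 * (2*R)) + (4*π)⁻¹ * (8 * B1 * (2*R))) := by
          apply mul_le_mul_of_nonneg_left ?_ hcoef
          exact add_le_add (mul_le_mul_of_nonneg_left hJ1 hc4)
            (mul_le_mul_of_nonneg_left hJ2 hc4)
      _ = GB * (4*π)⁻¹ * ((1 + Lτ) * 32 * B1 * R) * r := by ring
  -- conclude
  have hC0r : GB * (4*π)⁻¹ * 40 * B1 * r + GB * (4*π)⁻¹ * ((1 + Lτ) * 32 * B1 * R) * r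
      = C0 * r := by rw [hC0def]; ring
  have hfin : |(∫ η in Ω, F x η) - ∫ η in Ω, F x' η| ≤ C0 * r := by
    rw [← hC0r]
    calc |(∫ η in Ω, F x η) - ∫ η in Ω, F x' η| ≤ ∫ η in Ω, |F x η - F x' η| := habs
      _ = _ + _ := hsplit
      _ ≤ _ := add_le_add hnear hfar
  calc |(∫ η in Ω, F x η) - ∫ η in Ω, F x' η| ≤ C0 * r := hfin
    _ ≤ (C0 + 1) * r := by nlinarith
    _ = (C0 + 1) * Real.sqrt ‖h‖ := by rw [hrdef]
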